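/- Let X be a finite alphabet, F a finite set of words over X each of length at least 1, k a field, and A = k⟨X⟩/I(F). For every n ∈ ℕ, let A_n be the k-subspace of A spanned by the images of all words of length n. Then the images of the legal words of length n form a basis of A_n; in particular dim_k A_n = |L_n|, the number of legal words of length n. -/

import Mathlib

/-- A word is *legal* (with respect to the set of forbidden words `F`) if no element of `F`
is a contiguous factor of it. -/
def MonomialLegal {X : Type*} (F : Set (FreeMonoid X)) (w : FreeMonoid X) : Prop :=
  ∀ f ∈ F, ∀ u v : FreeMonoid X, w ≠ u * f * v

/-- The defining relation of the monomial algebra `A = k⟨X⟩/I(F)`: each forbidden word is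
identified with `0`, so that `RingQuot` of this relation is the quotient of
`k⟨X⟩ = MonoidAlgebra k (FreeMonoid X)` by the two-sided ideal generated by the words of `F`. -/
def monomialRel (k X : Type*) [Field k] (F : Set (FreeMonoid X)) :
    MonoidAlgebra k (FreeMonoid X) → MonoidAlgebra k (FreeMonoid X) → Prop :=
  fun a b => b = 0 ∧ ∃ f ∈ F, a = MonoidAlgebra.of k (FreeMonoid X) f

section Aux

variable (k : Type*) [Field k] {X : Type*} (F : Set (FreeMonoid X))

theorem not_legal_mul_right {F : Set (FreeMonoid X)} {w : FreeMonoid X}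
    (h : ¬ MonomialLegal F w) (v : FreeMonoid X) : ¬ MonomialLegal F (w * v) := by
  simp only [MonomialLegal, not_forall, not_not] at h ⊢
  obtain ⟨f, hf, u, v', h⟩ := h
  exact ⟨f, hf, u, v' * v, by simp [h, mul_assoc]⟩

theorem not_legal_mul_left {F : Set (FreeMonoid X)} {w : FreeMonoid X}
    (h : ¬ MonomialLegal F w) (v : FreeMonoid X) : ¬ MonomialLegal F (v * w) := by
  simp only [MonomialLegal, not_forall, not_not] at h ⊢
  obtain ⟨f, hf, u, v', h⟩ := h
  exact ⟨f, hf, v * u, v', by simp [h, mul_assoc]⟩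

/-- The space of elements of `k⟨X⟩` supported on illegal words. -/
def illegalSub : Submodule k (MonoidAlgebra k (FreeMonoid X)) where
  carrier := {x | ∀ w ∈ x.coeff.support, ¬ MonomialLegal F w}
  add_mem' := by
    classical
    intro a b ha hb w hw
    rcases Finset.mem_union.1 (Finsupp.support_add hw) with h | h
    · exact ha w h
    · exact hb w h
  zero_mem' := by intro w hw; simp at hw
  smul_mem' := by
    intro c x hx w hw
    exact hx w (Finsupp.support_smul hw)

theorem mem_illegalSub {x : MonoidAlgebra k (FreeMonoid X)} :
    x ∈ illegalSub k F ↔ ∀ w ∈ x.coeff.support, ¬ MonomialLegal F w := Iff.rfl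

theorem illegalSub_mul_right {x : MonoidAlgebra k (FreeMonoid X)}
    (hx : x ∈ illegalSub k F) (y : MonoidAlgebra k (FreeMonoid X)) :
    x * y ∈ illegalSub k F := by
  classical
  rw [mem_illegalSub]
  intro w hw
  rcases Finset.mem_mul.1 (MonoidAlgebra.support_coeff_mul_subset x y hw) with ⟨a, ha, b, hb, rfl⟩
  exact not_legal_mul_right (hx a ha) b

theorem illegalSub_mul_left {x : MonoidAlgebra k (FreeMonoid X)}
    (hx : x ∈ illegalSub k F) (y : MonoidAlgebra k (FreeMonoid X)) :
    y * x ∈ illegalSub k F := by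
  classical
  rw [mem_illegalSub]
  intro w hw
  rcases Finset.mem_mul.1 (MonoidAlgebra.support_coeff_mul_subset y x hw) with ⟨a, ha, b, hb, rfl⟩
  exact not_legal_mul_left (hx b hb) a

theorem not_legal_of_mem {f : FreeMonoid X} (hf : f ∈ F) : ¬ MonomialLegal F f := by
  intro h
  exact h f hf 1 1 (by simp)

theorem rel_sub_mem {a b : MonoidAlgebra k (FreeMonoid X)}
    (h : RingQuot.Rel (monomialRel k X F) a b) : a - b ∈ illegalSub k F := by
  induction h with
  | of h =>
    obtain ⟨rfl, f, hf, rfl⟩ := h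
    rw [sub_zero, mem_illegalSub]
    intro w hw
    have : w = f := by
      simpa [MonoidAlgebra.of_apply, MonoidAlgebra.coeff_single] using hw
    rw [this]
    exact not_legal_of_mem F hf
  | add_left _ ih => simpa using ih
  | mul_left _ ih =>
    rw [← sub_mul]
    exact illegalSub_mul_right k F ih _
  | mul_right _ ih =>
    rw [← mul_sub]
    exact illegalSub_mul_left k F ih _

theorem eqvGen_sub_mem {a b : MonoidAlgebra k (FreeMonoid X)}
    (h : Relation.EqvGen (RingQuot.Rel (monomialRel k X F)) a b) :
    a - b ∈ illegalSub k F := by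
  induction h with
  | rel a b h => exact rel_sub_mem k F h
  | refl a => simpa using (illegalSub k F).zero_mem
  | symm a b _ ih => simpa using (illegalSub k F).neg_mem ih
  | trans a b c _ _ ih1 ih2 => simpa using (illegalSub k F).add_mem ih1 ih2

theorem mk_eq_sub_mem {a b : MonoidAlgebra k (FreeMonoid X)}
    (h : RingQuot.mkAlgHom k (monomialRel k X F) a = RingQuot.mkAlgHom k (monomialRel k X F) b) :
    a - b ∈ illegalSub k F := by
  have h' : RingQuot.mkRingHom (monomialRel k X F) a
      = RingQuot.mkRingHom (monomialRel k X F) b := by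
    rw [← RingQuot.mkAlgHom_coe k (monomialRel k X F)]
    exact h
  rw [RingQuot.mkRingHom_def] at h'
  simp only [RingHom.coe_mk, MonoidHom.coe_mk, OneHom.coe_mk] at h'
  exact eqvGen_sub_mem k F (Quot.eqvGen_exact (congrArg RingQuot.toQuot h'))

end Aux

/-- In the monomial algebra `A = k⟨X⟩/I(F)`, for each `n`, the images of the legal words of
length `n` are linearly independent, they span the subspace `A_n` spanned by the images of all
words of length `n`, and consequently `dim_k A_n` equals the number of legal words of length
`n`. -/
theorem legal_words_basis_of_graded_component
    (k X : Type*) [Field k] [Fintype X] (F : Finset (FreeMonoid X))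
    (hF : ∀ f ∈ F, 1 ≤ FreeMonoid.length f) (n : ℕ) :
    LinearIndependent k
      (fun w : {w : FreeMonoid X // FreeMonoid.length w = n ∧ MonomialLegal (↑F) w} =>
        RingQuot.mkAlgHom k (monomialRel k X ↑F) (MonoidAlgebra.of k (FreeMonoid X) w.1)) ∧
    Submodule.span k
      (Set.range
        (fun w : {w : FreeMonoid X // FreeMonoid.length w = n ∧ MonomialLegal (↑F) w} =>
          RingQuot.mkAlgHom k (monomialRel k X ↑F) (MonoidAlgebra.of k (FreeMonoid X) w.1))) =
    Submodule.span k
      (Set.range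
        (fun w : {w : FreeMonoid X // FreeMonoid.length w = n} =>
          RingQuot.mkAlgHom k (monomialRel k X ↑F) (MonoidAlgebra.of k (FreeMonoid X) w.1))) ∧
    Module.finrank k
      ↥(Submodule.span k
        (Set.range
          (fun w : {w : FreeMonoid X // FreeMonoid.length w = n} =>
            RingQuot.mkAlgHom k (monomialRel k X ↑F)
              (MonoidAlgebra.of k (FreeMonoid X) w.1)))) =
    Nat.card {w : FreeMonoid X // FreeMonoid.length w = n ∧ MonomialLegal (↑F) w} := by
  classical
  set ι := {w : FreeMonoid X // FreeMonoid.length w = n ∧ MonomialLegal (↑F) w}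
  -- linear independence
  have hli : LinearIndependent k
      (fun w : ι =>
        RingQuot.mkAlgHom k (monomialRel k X ↑F) (MonoidAlgebra.of k (FreeMonoid X) w.1)) := by
    rw [linearIndependent_iff]
    intro l hl
    -- the corresponding element of k⟨X⟩
    set x : MonoidAlgebra k (FreeMonoid X) :=
      Finsupp.linearCombination k (fun w : ι => MonoidAlgebra.of k (FreeMonoid X) w.1) l with hx
    have hmk : RingQuot.mkAlgHom k (monomialRel k X ↑F) x
        = RingQuot.mkAlgHom k (monomialRel k X ↑F) 0 := by
      rw [map_zero, hx]
      rw [← hl]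
      simpa [Function.comp_def] using (Finsupp.apply_linearCombination k
        (RingQuot.mkAlgHom k (monomialRel k X ↑F)).toLinearMap
        (fun w : ι => MonoidAlgebra.of k (FreeMonoid X) w.1) l)
    have hxJ : x ∈ illegalSub k ↑F := by
      simpa using mk_eq_sub_mem k (↑F : Set (FreeMonoid X)) hmk
    -- every word in the support of x is legal
    have hsupp : ∀ w ∈ x.coeff.support, MonomialLegal (↑F) w := by
      intro w hw
      have : x.coeff = l.sum fun i c => Finsupp.single i.1 c := by
        rw [hx, Finsupp.linearCombination_apply, MonoidAlgebra.coeff_finsuppSum]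
        congr 1
        ext i c
        simp [MonoidAlgebra.of_apply, MonoidAlgebra.smul_single', MonoidAlgebra.coeff_single]
      rw [this] at hw
      rcases Finset.mem_biUnion.1 (Finsupp.support_sum hw) with ⟨i, _, hi⟩
      have : w = i.1 := by simpa using Finsupp.support_single_subset hi
      rw [this]
      exact i.2.2
    have hx0 : x = 0 := by
      ext w
      by_contra hne
      exact hxJ w (Finsupp.mem_support_iff.2 hne) (hsupp w (Finsupp.mem_support_iff.2 hne))
    -- the single words are linearly independent in k⟨X⟩
    have hli' : LinearIndependent k
        (fun w : ι => MonoidAlgebra.of k (FreeMonoid X) w.1) := by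
      have := (MonoidAlgebra.basis (FreeMonoid X) k).linearIndependent
      have h2 := this.comp (fun w : ι => w.1) Subtype.val_injective
      simpa [Function.comp_def, MonoidAlgebra.basis_apply, MonoidAlgebra.of_apply] using h2
    exact linearIndependent_iff.1 hli' l (by rw [← hx, hx0])
  refine ⟨hli, ?_, ?_⟩
  · -- spanning
    apply le_antisymm
    · rw [Submodule.span_le]
      rintro _ ⟨w, rfl⟩
      exact Submodule.subset_span ⟨⟨w.1, w.2.1⟩, rfl⟩
    · rw [Submodule.span_le]
      rintro _ ⟨w, rfl⟩
      by_cases hw : MonomialLegal (↑F) w.1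
      · exact Submodule.subset_span ⟨⟨w.1, w.2, hw⟩, rfl⟩
      · have : RingQuot.mkAlgHom k (monomialRel k X ↑F)
            (MonoidAlgebra.of k (FreeMonoid X) w.1) = 0 := by
          simp only [MonomialLegal, not_forall, not_not] at hw
          obtain ⟨f, hf, u, v, hw⟩ := hw
          have hrel : RingQuot.mkAlgHom k (monomialRel k X ↑F)
              (MonoidAlgebra.of k (FreeMonoid X) f) = 0 := by
            have := RingQuot.mkAlgHom_rel k
              (s := monomialRel k X ↑F)
              (x := MonoidAlgebra.of k (FreeMonoid X) f) (y := 0)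
              ⟨rfl, f, hf, rfl⟩
            simpa using this
          rw [hw, map_mul, map_mul, map_mul, map_mul, hrel]
          simp
        show RingQuot.mkAlgHom k (monomialRel k X ↑F)
          (MonoidAlgebra.of k (FreeMonoid X) w.1) ∈ _
        rw [this]
        exact Submodule.zero_mem _
  · -- dimension
    have hfin : {w : FreeMonoid X |
        FreeMonoid.length w = n ∧ MonomialLegal (↑F) w}.Finite :=
      (List.finite_length_eq X n).subset fun w hw => hw.1
    haveI : Finite ι := hfin.to_subtype
    haveI : Fintype ι := Fintype.ofFinite ι
    have hspan : Submodule.span k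
        (Set.range (fun w : {w : FreeMonoid X // FreeMonoid.length w = n} =>
          RingQuot.mkAlgHom k (monomialRel k X ↑F) (MonoidAlgebra.of k (FreeMonoid X) w.1)))
        = Submodule.span k
        (Set.range (fun w : ι =>
          RingQuot.mkAlgHom k (monomialRel k X ↑F) (MonoidAlgebra.of k (FreeMonoid X) w.1))) := by
      apply le_antisymm
      · rw [Submodule.span_le]
        rintro _ ⟨w, rfl⟩
        by_cases hw : MonomialLegal (↑F) w.1
        · exact Submodule.subset_span ⟨⟨w.1, w.2, hw⟩, rfl⟩
        · have : RingQuot.mkAlgHom k (monomialRel k X ↑F)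
              (MonoidAlgebra.of k (FreeMonoid X) w.1) = 0 := by
            simp only [MonomialLegal, not_forall, not_not] at hw
            obtain ⟨f, hf, u, v, hw⟩ := hw
            have hrel : RingQuot.mkAlgHom k (monomialRel k X ↑F)
                (MonoidAlgebra.of k (FreeMonoid X) f) = 0 := by
              have := RingQuot.mkAlgHom_rel k
                (s := monomialRel k X ↑F)
                (x := MonoidAlgebra.of k (FreeMonoid X) f) (y := 0)
                ⟨rfl, f, hf, rfl⟩
              simpa using this
            rw [hw, map_mul, map_mul, map_mul, map_mul, hrel]
            simp
          show RingQuot.mkAlgHom k (monomialRel k X ↑F)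
            (MonoidAlgebra.of k (FreeMonoid X) w.1) ∈ _
          rw [this]
          exact Submodule.zero_mem _
      · rw [Submodule.span_le]
        rintro _ ⟨w, rfl⟩
        exact Submodule.subset_span ⟨⟨w.1, w.2.1⟩, rfl⟩
    rw [hspan, finrank_span_eq_card hli, Nat.card_eq_fintype_card]
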